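/- Let V be an n-dimensional complex vector space and a, b ∈ (ℂ*)^n with a_i ≠ b_j for all i, j. If A, B ∈ GL(V) satisfy: the multiset of eigenvalues (with algebraic multiplicity) of A is {a_1,...,a_n}, the multiset of eigenvalues of B is {b_1,...,b_n}, and A∘B⁻¹ is a pseudo-reflection (i.e. rank(1 − A∘B⁻¹) = 1), then there exists a basis of V in which A is represented by the companion matrix of the polynomial ∏(X − a_i) and B is represented by the companion matrix of ∏(X − b_i). -/

import Mathlib

open Polynomial

/-- The companion matrix of a monic polynomial of degree `n`:
1's on the subdiagonal, last column `(-A_n, ..., -A_1)ᵀ` (i.e. row `i` is `-p.coeff i`),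
zeros elsewhere. -/
noncomputable def companion (n : ℕ) (p : Polynomial ℂ) : Matrix (Fin n) (Fin n) ℂ :=
  Matrix.of fun i j =>
    if (i : ℕ) = (j : ℕ) + 1 then 1
    else if (j : ℕ) = n - 1 then -p.coeff i
    else 0

lemma eig_root {V : Type} [AddCommGroup V] [Module ℂ V] [FiniteDimensional ℂ V]
    (f : V →ₗ[ℂ] V) {μ : ℂ} {v : V} (hv : v ≠ 0) (hfv : f v = μ • v) :
    (LinearMap.charpoly f).IsRoot μ := by
  have hev : Module.End.HasEigenvalue f μ :=
    Module.End.hasEigenvalue_of_hasEigenvector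
      ⟨Module.End.mem_eigenspace_iff.mpr hfv, hv⟩
  have hroot : (minpoly ℂ f).IsRoot μ := Module.End.hasEigenvalue_iff_isRoot.mp hev
  obtain ⟨c, hc⟩ := LinearMap.minpoly_dvd_charpoly f
  rw [hc]
  simpa using Or.inl hroot

lemma toMatrix_eq_companion {n : ℕ} (hn : 0 < n) {V : Type} [AddCommGroup V] [Module ℂ V]
    [FiniteDimensional ℂ V] (hdim : Module.finrank ℂ V = n) (f : V →ₗ[ℂ] V)
    (bas : Module.Basis (Fin n) ℂ V) (e : V)
    (hcyc : ∀ i : Fin n, bas i = (f ^ (i : ℕ)) e) :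
    LinearMap.toMatrix bas bas f = companion n (LinearMap.charpoly f) := by
  have hdeg : (LinearMap.charpoly f).natDegree = n := by
    rw [f.charpoly_natDegree, hdim]
  have hCH : (f ^ n) e = ∑ i : Fin n, (-(LinearMap.charpoly f).coeff i) • bas i := by
    have h0 : (aeval f (LinearMap.charpoly f)) e = 0 := by
      rw [f.aeval_self_charpoly]; rfl
    rw [aeval_eq_sum_range, hdeg, Finset.sum_range_succ] at h0
    have hlead : (LinearMap.charpoly f).coeff n = 1 := by
      rw [← hdeg]; exact f.charpoly_monic.coeff_natDegree
    rw [hlead, one_smul] at h0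
    simp only [LinearMap.add_apply, LinearMap.sum_apply, LinearMap.smul_apply] at h0
    rw [eq_neg_of_add_eq_zero_right h0, ← Finset.sum_neg_distrib,
      ← Fin.sum_univ_eq_sum_range fun i => -((LinearMap.charpoly f).coeff i • (f ^ i) e)]
    exact Finset.sum_congr rfl fun i _ => by rw [hcyc, neg_smul]
  ext i j
  rw [LinearMap.toMatrix_apply]
  by_cases hj : (j : ℕ) + 1 < n
  · have hfj : f (bas j) = bas ⟨(j : ℕ) + 1, hj⟩ := by
      rw [hcyc, hcyc]
      simp [pow_succ', Module.End.mul_apply]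
    rw [hfj, bas.repr_self]
    simp only [companion, Matrix.of_apply, Finsupp.single_apply]
    have hji := j.isLt
    have hjne : (j : ℕ) ≠ n - 1 := by omega
    by_cases hij : (i : ℕ) = (j : ℕ) + 1
    · have : (⟨(j : ℕ) + 1, hj⟩ : Fin n) = i := by
        exact Fin.ext hij.symm
      simp [this, hij]
    · have : (⟨(j : ℕ) + 1, hj⟩ : Fin n) ≠ i := by
        intro h; exact hij (by rw [← h])
      simp [this, hij, hjne]
  · have hj2 : (j : ℕ) = n - 1 := by omega
    have hfj : f (bas j) = (f ^ n) e := by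
      have h1 : f (bas j) = (f ^ ((j : ℕ) + 1)) e := by
        rw [hcyc]; simp [pow_succ', Module.End.mul_apply]
      have hji := j.isLt
      rwa [show (j : ℕ) + 1 = n by omega] at h1
    rw [hfj, hCH]
    simp only [map_sum, map_smul, bas.repr_self, Finsupp.coe_finset_sum, Finsupp.coe_smul,
      Finset.sum_apply, Pi.smul_apply, Finsupp.single_apply, smul_eq_mul]
    rw [Finset.sum_eq_single i]
    · have hii := i.isLt
      have hji := j.isLt
      simp only [companion, Matrix.of_apply]
      rw [if_neg (by omega : ¬ ((i : ℕ) = (j : ℕ) + 1)), if_pos hj2]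
      simp
    · intro k _ hk; simp [hk]
    · intro h; exact absurd (Finset.mem_univ i) h

/-- **Levelt's Lemma.** If `A`, `B` are automorphisms of an `n`-dimensional complex vector
space with characteristic polynomials `∏ (X - aᵢ)` and `∏ (X - bᵢ)` respectively, where all
`aᵢ, bⱼ` are nonzero and `aᵢ ≠ bⱼ`, and `A ∘ B⁻¹` is a pseudo-reflection, then there is a
basis in which `A` and `B` are simultaneously represented by the companion matrices of their
characteristic polynomials. -/
theorem levelt_lemma (n : ℕ) (hn : 0 < n) (V : Type) [AddCommGroup V] [Module ℂ V]
    [FiniteDimensional ℂ V] (hdim : Module.finrank ℂ V = n)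
    (a b : Fin n → ℂ) (ha : ∀ i, a i ≠ 0) (hb : ∀ i, b i ≠ 0)
    (hab : ∀ i j, a i ≠ b j)
    (A B : V ≃ₗ[ℂ] V)
    (hA : LinearMap.charpoly (A : V →ₗ[ℂ] V) = ∏ i, (X - C (a i)))
    (hB : LinearMap.charpoly (B : V →ₗ[ℂ] V) = ∏ i, (X - C (b i)))
    (hps : LinearMap.rank ((LinearMap.id : V →ₗ[ℂ] V)
        - (A : V →ₗ[ℂ] V) ∘ₗ (B.symm : V →ₗ[ℂ] V)) = 1) :
    ∃ bas : Module.Basis (Fin n) ℂ V,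
      LinearMap.toMatrix bas bas (A : V →ₗ[ℂ] V) = companion n (∏ i, (X - C (a i))) ∧
      LinearMap.toMatrix bas bas (B : V →ₗ[ℂ] V) = companion n (∏ i, (X - C (b i))) := by
  set fA : V →ₗ[ℂ] V := (A : V →ₗ[ℂ] V) with hfA
  set fB : V →ₗ[ℂ] V := (B : V →ₗ[ℂ] V) with hfB
  set W : Submodule ℂ V := LinearMap.ker (fB - fA) with hWdef
  have hWeq : ∀ x ∈ W, fB x = fA x := by
    intro x hx
    have := LinearMap.mem_ker.mp hx
    rwa [LinearMap.sub_apply, sub_eq_zero] at this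
  -- rank of fB - fA is 1
  have hcomp : ((LinearMap.id : V →ₗ[ℂ] V) - fA ∘ₗ (B.symm : V →ₗ[ℂ] V)) ∘ₗ fB = fB - fA := by
    ext x
    simp [hfA, hfB, LinearMap.sub_apply]
  have hWrank : Module.finrank ℂ W + 1 = n := by
    have hr : LinearMap.rank (fB - fA) = 1 := by
      rw [← hcomp]
      unfold LinearMap.rank
      rw [LinearMap.range_comp_of_range_eq_top _ (LinearEquiv.range B)]
      exact hps
    have hfr : Module.finrank ℂ (LinearMap.range (fB - fA)) = 1 :=
      Module.rank_eq_one_iff_finrank_eq_one.mp hr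
    have hrn := LinearMap.finrank_range_add_finrank_ker (fB - fA)
    rw [hfr, hdim, ← hWdef] at hrn
    omega
  -- comap of W has codim ≤ 1
  have hcomap : ∀ g : V →ₗ[ℂ] V, n ≤ Module.finrank ℂ ↥(Submodule.comap g W) + 1 := by
    intro g
    have h1 : W.comap g = LinearMap.ker (W.mkQ ∘ₗ g) := by
      rw [LinearMap.ker_comp, Submodule.ker_mkQ]
    have h2 := LinearMap.finrank_range_add_finrank_ker (W.mkQ ∘ₗ g)
    have h3 : Module.finrank ℂ (LinearMap.range (W.mkQ ∘ₗ g)) ≤ Module.finrank ℂ (V ⧸ W) :=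
      Submodule.finrank_le _
    have h4 := Submodule.finrank_quotient_add_finrank W
    rw [hdim] at h2 h4
    rw [show Submodule.comap g W = LinearMap.ker (W.mkQ ∘ₗ g) from h1]
    omega
  -- intersection dimension lower bound
  have hK : ∀ k : ℕ, n ≤ Module.finrank ℂ ↥(⨅ j ∈ Finset.range k, Submodule.comap (fA ^ j) W) + k := by
    intro k
    induction k with
    | zero =>
      rw [show (⨅ j ∈ Finset.range 0, Submodule.comap (fA ^ j) W) = ⊤ by simp]
      rw [finrank_top, hdim]
      omega
    | succ k ih =>
      rw [Finset.range_add_one]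
      rw [Finset.iInf_insert]
      set p := ⨅ j ∈ Finset.range k, Submodule.comap (fA ^ j) W
      set q := Submodule.comap (fA ^ k) W
      have h1 := Submodule.finrank_sup_add_finrank_inf_eq q p
      have h2 : Module.finrank ℂ (q ⊔ p : Submodule ℂ V) ≤ n := by
        rw [← hdim]; exact Submodule.finrank_le _
      have h3 : n ≤ Module.finrank ℂ ↥q + 1 := hcomap (fA ^ k)
      omega
  -- pick nonzero e in the intersection
  obtain ⟨e, heK, he0⟩ :
      ∃ e ∈ (⨅ j ∈ Finset.range (n - 1), Submodule.comap (fA ^ j) W), e ≠ 0 := by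
    have hKpos : 0 < Module.finrank ℂ ↥(⨅ j ∈ Finset.range (n - 1), Submodule.comap (fA ^ j) W) := by
      have := hK (n - 1); omega
    haveI := Module.finrank_pos_iff.mp hKpos
    obtain ⟨⟨x, hx⟩, hx0⟩ := exists_ne (0 : ↥(⨅ j ∈ Finset.range (n - 1), Submodule.comap (fA ^ j) W))
    exact ⟨x, hx, fun h => hx0 (Subtype.ext h)⟩
  set v : ℕ → V := fun j => (fA ^ j) e with hv
  have hvW : ∀ j, j < n - 1 → v j ∈ W := by
    intro j hj
    simp only [Submodule.mem_iInf, Finset.mem_range, Submodule.mem_comap] at heK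
    exact heK j hj
  have hvsucc : ∀ j, fA (v j) = v (j + 1) := by
    intro j; simp [hv, pow_succ', Module.End.mul_apply]
  have hv0 : v 0 = e := by simp [hv]
  -- contradiction from invariant subspaces of W
  have hinv : ∀ S : Submodule ℂ V, S ≠ ⊥ → S ≤ W → (∀ x ∈ S, fA x ∈ S) → False := by
    intro S hS hSW hSinv
    have : Nontrivial S := Submodule.nontrivial_iff_ne_bot.mpr hS
    set g : Module.End ℂ S := fA.restrict hSinv with hg
    obtain ⟨μ, hμ⟩ := Module.End.exists_eigenvalue g
    obtain ⟨w, hw⟩ := hμ.exists_hasEigenvector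
    have hw0 : (w : V) ≠ 0 := fun h => hw.2 (Subtype.ext h)
    have hAw : fA (w : V) = μ • (w : V) := by
      have h1 : g w = μ • w := hw.apply_eq_smul
      have h2 : (g w : V) = fA (w : V) := rfl
      rw [← h2, h1]; rfl
    have hBw : fB (w : V) = μ • (w : V) := by
      rw [hWeq _ (hSW w.2), hAw]
    have hrA : (LinearMap.charpoly fA).IsRoot μ := eig_root fA hw0 hAw
    have hrB : (LinearMap.charpoly fB).IsRoot μ := eig_root fB hw0 hBw
    rw [hA] at hrA
    rw [hB] at hrB
    simp only [IsRoot, eval_prod, eval_sub, eval_X, eval_C,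
      Finset.prod_eq_zero_iff, sub_eq_zero] at hrA hrB
    obtain ⟨i, -, hi⟩ := hrA
    obtain ⟨j, -, hj⟩ := hrB
    exact hab i j (by rw [← hi, ← hj])
  -- linear independence of v 0, ..., v (n-1)
  have hli : ∀ k, k ≤ n → LinearIndependent ℂ (fun i : Fin k => v i) := by
    intro k
    induction k with
    | zero => intro _; exact linearIndependent_empty_type
    | succ k ih =>
      intro hk1
      have hsnoc : (fun i : Fin (k + 1) => v i)
          = Fin.snoc (fun i : Fin k => v i) (v k) := by
        funext i
        refine Fin.lastCases ?_ ?_ i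
        · simp
        · intro i; simp
      rw [hsnoc, linearIndependent_fin_snoc]
      refine ⟨ih (by omega), ?_⟩
      intro hmem
      set S := Submodule.span ℂ (Set.range fun i : Fin k => v i) with hS
      have hk0 : 0 < k := by
        rcases Nat.eq_zero_or_pos k with h | h
        · subst h
          rw [hS] at hmem
          have : (Set.range fun i : Fin 0 => v i) = ∅ := Set.range_eq_empty _
          rw [this, Submodule.span_empty, Submodule.mem_bot] at hmem
          exact absurd (hv0 ▸ hmem) he0
        · exact h
      refine hinv S ?_ ?_ ?_
      · intro hbot
        have : v 0 ∈ S := Submodule.subset_span ⟨⟨0, hk0⟩, rfl⟩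
        rw [hbot, Submodule.mem_bot] at this
        exact he0 (hv0 ▸ this)
      · rw [hS, Submodule.span_le]
        rintro x ⟨i, rfl⟩
        exact hvW i (by omega)
      · intro x hx
        have hmap : Submodule.map fA S ≤ S := by
          rw [hS, Submodule.map_span, Submodule.span_le]
          rintro x ⟨y, ⟨i, rfl⟩, rfl⟩
          rw [hvsucc]
          rcases Nat.lt_or_ge ((i : ℕ) + 1) k with h | h
          · exact Submodule.subset_span ⟨⟨(i : ℕ) + 1, h⟩, rfl⟩
          · have : (i : ℕ) + 1 = k := by omega
            rw [this]; exact hmem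
        exact hmap ⟨x, hx, rfl⟩
  have hcard : Fintype.card (Fin n) = Module.finrank ℂ V := by simp [hdim]
  haveI : Nonempty (Fin n) := Fin.pos_iff_nonempty.mp hn
  set bas := basisOfLinearIndependentOfCardEqFinrank (hli n le_rfl) hcard with hbasdef
  have hbas : ∀ i : Fin n, bas i = v i := by
    intro i
    rw [hbasdef, coe_basisOfLinearIndependentOfCardEqFinrank]
  refine ⟨bas, ?_, ?_⟩
  · rw [← hA]
    exact toMatrix_eq_companion hn hdim fA bas e fun i => hbas i
  · rw [← hB]
    apply toMatrix_eq_companion hn hdim fB bas e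
    intro i
    rw [hbas]
    have key : ∀ j, j ≤ n - 1 → (fB ^ j) e = v j := by
      intro j
      induction j with
      | zero => intro _; simp [hv]
      | succ j ihj =>
        intro hj
        have h1 : (fB ^ (j + 1)) e = fB ((fB ^ j) e) := by
          simp [pow_succ', Module.End.mul_apply]
        rw [h1, ihj (by omega), hWeq _ (hvW j (by omega)), hvsucc]
    exact (key (i : ℕ) (by omega)).symm
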